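/- arXiv:2303.00115 — 7 statements merged into one kernel-verified Lean document; each statement's English description precedes it below -/
import Mathlib

section
/- Fix a, b ∈ ℝ and define H(x) = x³ + a x + b and F(x) = (x⁴ − 2 a x² − 8 b x + a²) / (4 (x³ + a x + b)). Then for every x ∈ ℝ with x³ + a x + b ≠ 0, the identity H(F(x)) = (1/4)·[F'(x)]²·H(x) holds. -/
/-- The tangent-line map on x-coordinates of the elliptic curve `y² = x³ + ax + b`
satisfies the functional identity `H ∘ F = (1/4) (F')² H`. -/
theorem elliptic_tangent_identity (a b : ℝ) (H F : ℝ → ℝ)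
    (hH : H = fun x => x ^ 3 + a * x + b)
    (hF : F = fun x => (x ^ 4 - 2 * a * x ^ 2 - 8 * b * x + a ^ 2) /
      (4 * (x ^ 3 + a * x + b))) :
    ∀ x : ℝ, x ^ 3 + a * x + b ≠ 0 →
      H (F x) = (1 / 4) * (deriv F x) ^ 2 * H x := by
  intro x hx
  have hx4 : (4 : ℝ) * (x ^ 3 + a * x + b) ≠ 0 := by
    intro h; apply hx; linarith [mul_eq_zero.mp h |>.resolve_left (by norm_num)]
  have hN : HasDerivAt (fun x : ℝ => x ^ 4 - 2 * a * x ^ 2 - 8 * b * x + a ^ 2)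
      (4 * x ^ 3 - 2 * a * (2 * x) - 8 * b) x := by
    have h1 := ((((hasDerivAt_pow 4 x).sub ((hasDerivAt_pow 2 x).const_mul (2 * a))).sub
        ((hasDerivAt_id x).const_mul (8 * b))).add_const (a ^ 2))
    simpa using h1
  have hD : HasDerivAt (fun x : ℝ => 4 * (x ^ 3 + a * x + b))
      (4 * (3 * x ^ 2 + a)) x := by
    have h1 := (((hasDerivAt_pow 3 x).add ((hasDerivAt_id x).const_mul a)).add_const b).const_mul 4
    simpa using h1
  have hFd : HasDerivAt F
      (((4 * x ^ 3 - 2 * a * (2 * x) - 8 * b) * (4 * (x ^ 3 + a * x + b)) -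
        (x ^ 4 - 2 * a * x ^ 2 - 8 * b * x + a ^ 2) * (4 * (3 * x ^ 2 + a))) /
        (4 * (x ^ 3 + a * x + b)) ^ 2) x := by
    rw [hF]; exact hN.div hD hx4
  rw [hFd.deriv, hH, hF]
  simp only
  field_simp
  have hx' : x * (x ^ 2 + a) + b ≠ 0 := by convert hx using 1; ring
  field_simp
  ring
end

section
/- Fix ℓ ∈ [0,1) and define F_ℓ(x) = 4x(1−x)(1−ℓx) / (1−ℓx²)² and H_ℓ(x) = x(1−x)(1−ℓx). Then for every x ∈ ℝ with 1 − ℓx² ≠ 0, the identity H_ℓ(F_ℓ(x)) = (1/4)·[F_ℓ'(x)]²·H_ℓ(x) holds. -/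
/-- The Katsura-Fukuda map `F_ℓ` satisfies `H_ℓ ∘ F_ℓ = (1/4) (F_ℓ')² H_ℓ`
with `H_ℓ(x) = x(1-x)(1-ℓx)`, wherever `1 - ℓx² ≠ 0`. -/
theorem katsura_fukuda_identity (ℓ : ℝ) (hℓ : ℓ ∈ Set.Ico (0 : ℝ) 1)
    (F H : ℝ → ℝ)
    (hF : F = fun x => 4 * x * (1 - x) * (1 - ℓ * x) / (1 - ℓ * x ^ 2) ^ 2)
    (hH : H = fun x => x * (1 - x) * (1 - ℓ * x)) :
    ∀ x : ℝ, 1 - ℓ * x ^ 2 ≠ 0 →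
      H (F x) = (1 / 4) * (deriv F x) ^ 2 * H x := by
  intro x hx
  have hD2 : ((1 - ℓ * x ^ 2) ^ 2 : ℝ) ≠ 0 := pow_ne_zero _ hx
  -- derivative of numerator
  have hN : HasDerivAt (fun x : ℝ => 4 * x * (1 - x) * (1 - ℓ * x))
      ((4 * (1 - x) + 4 * x * (-1)) * (1 - ℓ * x) + 4 * x * (1 - x) * (-ℓ)) x := by
    have h1 : HasDerivAt (fun x : ℝ => 4 * x) 4 x := by
      simpa using (hasDerivAt_id x).const_mul (4 : ℝ)
    have h2 : HasDerivAt (fun x : ℝ => 1 - x) (-1) x := by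
      simpa using (hasDerivAt_id x).const_sub (1 : ℝ)
    have h3 : HasDerivAt (fun x : ℝ => 1 - ℓ * x) (-ℓ) x := by
      simpa using ((hasDerivAt_id x).const_mul ℓ).const_sub (1 : ℝ)
    simpa [Pi.mul_def] using (h1.mul h2).mul h3
  have hg : HasDerivAt (fun x : ℝ => (1 - ℓ * x ^ 2) ^ 2)
      (2 * (1 - ℓ * x ^ 2) ^ 1 * (-(ℓ * (2 * x)))) x := by
    have h4 : HasDerivAt (fun x : ℝ => 1 - ℓ * x ^ 2) (-(ℓ * (2 * x))) x := by
      simpa using (((hasDerivAt_pow 2 x)).const_mul ℓ).const_sub (1 : ℝ)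
    exact h4.pow 2
  have hF' : HasDerivAt F
      ((((4 * (1 - x) + 4 * x * (-1)) * (1 - ℓ * x) + 4 * x * (1 - x) * (-ℓ)) *
          ((1 - ℓ * x ^ 2) ^ 2) -
        (4 * x * (1 - x) * (1 - ℓ * x)) * (2 * (1 - ℓ * x ^ 2) ^ 1 * (-(ℓ * (2 * x))))) /
        ((1 - ℓ * x ^ 2) ^ 2) ^ 2) x := by
    rw [hF]
    exact hN.div hg hD2
  rw [hF'.deriv, hF, hH]
  simp only
  have hx' : (1 - x ^ 2 * ℓ) ≠ 0 := by rwa [mul_comm] at hx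
  field_simp
  ring
end

section
/- Let D ⊆ ℝ, let F : ℝ → ℝ be differentiable at every point of D with F(D) ⊆ D, and let H : ℝ → ℝ satisfy H(F(x)) = (1/4)·[F'(x)]²·H(x) for all x ∈ D. Suppose x₁, x₂, …, x_p ∈ D is a period-p orbit of F (i.e., F(x_n) = x_{n+1} for 1 ≤ n ≤ p−1 and F(x_p) = x₁) with H(x_n) ≠ 0 for every n. Then (∏_{n=1}^p F'(x_n))² = 4^p; equivalently, the multiplier λ = ∏_{n=1}^p F'(x_n) of the orbit satisfies |λ| = 2^p. -/
/-- If `H ∘ F = (1/4) (F')² H` on a forward-invariant set `D`, then every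
period-`p` orbit in `D` avoiding the zeros of `H` has multiplier `λ` with
`λ² = 4^p`, i.e. `|λ| = 2^p`. Here the orbit is indexed as `x 0, …, x (p-1)`. -/
theorem multiplier_from_functional_relation (D : Set ℝ) (F H : ℝ → ℝ)
    (hdiff : ∀ x ∈ D, DifferentiableAt ℝ F x)
    (hmaps : Set.MapsTo F D D)
    (hrel : ∀ x ∈ D, H (F x) = (1 / 4) * (deriv F x) ^ 2 * H x)
    (p : ℕ) (hp : 1 ≤ p) (x : ℕ → ℝ)
    (hxD : ∀ n < p, x n ∈ D)
    (horb : ∀ n, n + 1 < p → F (x n) = x (n + 1))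
    (hper : F (x (p - 1)) = x 0)
    (hH : ∀ n < p, H (x n) ≠ 0) :
    (∏ n ∈ Finset.range p, deriv F (x n)) ^ 2 = 4 ^ p ∧
      |∏ n ∈ Finset.range p, deriv F (x n)| = 2 ^ p := by
  set lam := ∏ n ∈ Finset.range p, deriv F (x n) with hlam
  obtain ⟨q, rfl⟩ : ∃ q, p = q + 1 := ⟨p - 1, by omega⟩
  have key : ∏ n ∈ Finset.range (q + 1), H (F (x n)) =
      ∏ n ∈ Finset.range (q + 1), ((1 / 4) * (deriv F (x n)) ^ 2 * H (x n)) :=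
    Finset.prod_congr rfl fun n hn => hrel _ (hxD n (Finset.mem_range.mp hn))
  have lhs : ∏ n ∈ Finset.range (q + 1), H (F (x n)) =
      ∏ n ∈ Finset.range (q + 1), H (x n) := by
    rw [Finset.prod_range_succ, Finset.prod_range_succ']
    congr 1
    · exact Finset.prod_congr rfl fun n hn => by
        rw [horb n (by simpa using Finset.mem_range.mp hn)]
    · have : q + 1 - 1 = q := rfl
      rw [this] at hper
      rw [hper]
  have rhs : ∏ n ∈ Finset.range (q + 1), ((1 / 4 : ℝ) * (deriv F (x n)) ^ 2 * H (x n)) =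
      (1 / 4) ^ (q + 1) * lam ^ 2 * ∏ n ∈ Finset.range (q + 1), H (x n) := by
    rw [Finset.prod_mul_distrib, Finset.prod_mul_distrib, Finset.prod_const,
      Finset.card_range, Finset.prod_pow, hlam]
  have hHprod : (∏ n ∈ Finset.range (q + 1), H (x n)) ≠ 0 :=
    Finset.prod_ne_zero_iff.mpr fun n hn => hH n (Finset.mem_range.mp hn)
  have heq : (1 / 4 : ℝ) ^ (q + 1) * lam ^ 2 = 1 := by
    have h := lhs.symm.trans (key.trans rhs)
    have h' : (1 : ℝ) * (∏ n ∈ Finset.range (q + 1), H (x n)) =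
        ((1 / 4 : ℝ) ^ (q + 1) * lam ^ 2) * ∏ n ∈ Finset.range (q + 1), H (x n) := by
      rw [one_mul]; exact h
    exact (mul_right_cancel₀ hHprod h').symm
  have h4 : (0 : ℝ) < 4 ^ (q + 1) := by positivity
  have h1 : lam ^ 2 = 4 ^ (q + 1) := by
    have hrw : (1 / 4 : ℝ) ^ (q + 1) = (4 ^ (q + 1))⁻¹ := by
      rw [one_div, inv_pow]
    rw [hrw, inv_mul_eq_div, div_eq_one_iff_eq (ne_of_gt h4)] at heq
    exact heq
  refine ⟨h1, ?_⟩
  have h2 : |lam| ^ 2 = ((2 : ℝ) ^ (q + 1)) ^ 2 := by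
    rw [sq_abs, h1, ← pow_mul, mul_comm (q + 1) 2, pow_mul]
    norm_num
  nlinarith [abs_nonneg lam, pow_pos (two_pos (α := ℝ)) (q + 1), h2,
    sq_nonneg (|lam| - 2 ^ (q + 1))]
end

section
/- Let T₂(x) = 1 − 2x². If x₁, x₂, …, x_p ∈ (−1,1) is a period-p orbit of T₂ (i.e., T₂(x_n) = x_{n+1} for 1 ≤ n ≤ p−1 and T₂(x_p) = x₁) with x_n ∉ {−1,1} for all n, then the multiplier λ = ∏_{n=1}^p T₂'(x_n) satisfies λ² = 4^p, i.e., |λ| = 2^p. -/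
/-- Every period-`p` orbit of the Chebyshev map `T₂(x) = 1 - 2x²` in `(-1,1)`
avoiding `±1` has multiplier `λ` with `λ² = 4^p`, i.e. `|λ| = 2^p`.
The orbit is indexed as `x 0, …, x (p-1)`. -/
theorem chebyshev_multiplier (T₂ : ℝ → ℝ) (hT : T₂ = fun x => 1 - 2 * x ^ 2)
    (p : ℕ) (hp : 1 ≤ p) (x : ℕ → ℝ)
    (hxI : ∀ n < p, x n ∈ Set.Ioo (-1 : ℝ) 1)
    (hx1 : ∀ n < p, x n ≠ -1 ∧ x n ≠ 1)
    (horb : ∀ n, n + 1 < p → T₂ (x n) = x (n + 1))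
    (hper : T₂ (x (p - 1)) = x 0) :
    (∏ n ∈ Finset.range p, deriv T₂ (x n)) ^ 2 = 4 ^ p ∧
      |∏ n ∈ Finset.range p, deriv T₂ (x n)| = 2 ^ p := by
  have hd : ∀ y : ℝ, deriv T₂ y = -4 * y := by
    intro y
    subst hT
    have : HasDerivAt (fun x : ℝ => 1 - 2 * x ^ 2) (-4 * y) y := by
      have h1 : HasDerivAt (fun x : ℝ => x ^ 2) (2 * y) y := by
        simpa using hasDerivAt_pow 2 y
      have h2 := (h1.const_mul (2 : ℝ)).const_sub 1
      rw [show (-4 * y) = -(2 * (2 * y)) by ring]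
      exact h2
    exact this.deriv
  -- abbreviations
  set H : ℕ → ℝ := fun n => 1 - (x n) ^ 2 with hH
  have hHpos : ∀ n < p, 0 < H n := by
    intro n hn
    obtain ⟨h1, h2⟩ := hxI n hn
    simp only [hH]
    nlinarith
  -- key per-term identity
  have hkey : ∀ n < p, (-4 * x n) ^ 2 * H n = 4 * (1 - (T₂ (x n)) ^ 2) := by
    intro n hn
    subst hT
    simp only [hH]
    ring
  -- product of (1 - (T₂ x n)^2) telescopes
  obtain ⟨m, rfl⟩ : ∃ m, p = m + 1 := ⟨p - 1, (Nat.succ_pred_eq_of_pos hp).symm⟩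
  have htel : ∏ n ∈ Finset.range (m + 1), (1 - (T₂ (x n)) ^ 2)
      = ∏ n ∈ Finset.range (m + 1), H n := by
    rw [Finset.prod_range_succ, Finset.prod_range_succ']
    have h0 : T₂ (x m) = x 0 := by simpa using hper
    rw [h0]
    congr 1
    apply Finset.prod_congr rfl
    intro n hn
    rw [horb n (by simpa using Nat.succ_lt_succ (Finset.mem_range.mp hn))]
  have hHprod_pos : 0 < ∏ n ∈ Finset.range (m + 1), H n :=
    Finset.prod_pos fun n hn => hHpos n (Finset.mem_range.mp hn)
  have hmain : (∏ n ∈ Finset.range (m + 1), (-4 * x n)) ^ 2 = 4 ^ (m + 1) := by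
    have h1 : (∏ n ∈ Finset.range (m + 1), (-4 * x n)) ^ 2
        * ∏ n ∈ Finset.range (m + 1), H n
        = 4 ^ (m + 1) * ∏ n ∈ Finset.range (m + 1), H n := by
      rw [← Finset.prod_pow, ← Finset.prod_mul_distrib]
      rw [Finset.prod_congr rfl fun n hn => hkey n (Finset.mem_range.mp hn)]
      rw [Finset.prod_mul_distrib, Finset.prod_const, Finset.card_range, htel]
    exact mul_right_cancel₀ (ne_of_gt hHprod_pos) h1
  have hprod_eq : (∏ n ∈ Finset.range (m + 1), deriv T₂ (x n))
      = ∏ n ∈ Finset.range (m + 1), (-4 * x n) :=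
    Finset.prod_congr rfl fun n _ => hd (x n)
  rw [hprod_eq]
  refine ⟨hmain, ?_⟩
  have h2 : |∏ n ∈ Finset.range (m + 1), (-4 * x n)| ^ 2 = ((2:ℝ) ^ (m + 1)) ^ 2 := by
    rw [sq_abs, hmain, show (4:ℝ) = 2 ^ 2 by norm_num, ← pow_mul, ← pow_mul,
      Nat.mul_comm]
  nlinarith [abs_nonneg (∏ n ∈ Finset.range (m + 1), (-4 * x n)),
    pow_pos (by norm_num : (0:ℝ) < 2) (m + 1)]
end

section
/- Fix a, b ∈ ℝ and define H(x) = x³ + a x + b and F(x) = (x⁴ − 2 a x² − 8 b x + a²) / (4 (x³ + a x + b)). If x₁, x₂, …, x_p is a period-p orbit of F (i.e., F(x_n) = x_{n+1} for 1 ≤ n ≤ p−1 and F(x_p) = x₁) with H(x_n) ≠ 0 for all n, then the multiplier λ = ∏_{n=1}^p F'(x_n) satisfies λ² = 4^p, i.e., |λ| = 2^p. -/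
lemma deriv_Fmap (a b x : ℝ) (hx : x ^ 3 + a * x + b ≠ 0) :
    deriv (fun x : ℝ => (x ^ 4 - 2 * a * x ^ 2 - 8 * b * x + a ^ 2) /
      (4 * (x ^ 3 + a * x + b))) x =
    ((4 * x ^ 3 - 4 * a * x - 8 * b) * (4 * (x ^ 3 + a * x + b)) -
      (x ^ 4 - 2 * a * x ^ 2 - 8 * b * x + a ^ 2) * (4 * (3 * x ^ 2 + a))) /
      (4 * (x ^ 3 + a * x + b)) ^ 2 := by
  have hN : HasDerivAt (fun y : ℝ => y ^ 4 - 2 * a * y ^ 2 - 8 * b * y + a ^ 2)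
      (4 * x ^ 3 - 4 * a * x - 8 * b) x := by
    have h := (((hasDerivAt_pow 4 x).sub
      ((hasDerivAt_pow 2 x).const_mul (2 * a))).sub
      ((hasDerivAt_id x).const_mul (8 * b))).add_const (a ^ 2)
    refine h.congr_deriv ?_
    push_cast
    ring
  have hD : HasDerivAt (fun y : ℝ => 4 * (y ^ 3 + a * y + b))
      (4 * (3 * x ^ 2 + a)) x := by
    have h := ((((hasDerivAt_pow 3 x).add
      ((hasDerivAt_id x).const_mul a)).add_const b).const_mul 4)
    refine h.congr_deriv ?_
    push_cast
    ring
  have hDne : 4 * (x ^ 3 + a * x + b) ≠ 0 := by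
    intro h
    apply hx
    linarith
  exact (hN.div hD hDne).deriv

lemma key_identity (a b x : ℝ) (hx : x ^ 3 + a * x + b ≠ 0) :
    let F := fun x : ℝ => (x ^ 4 - 2 * a * x ^ 2 - 8 * b * x + a ^ 2) /
      (4 * (x ^ 3 + a * x + b))
    (F x) ^ 3 + a * (F x) + b = (deriv F x) ^ 2 * (x ^ 3 + a * x + b) / 4 := by
  intro F
  rw [show deriv F x = _ from deriv_Fmap a b x hx]
  show ((x ^ 4 - 2 * a * x ^ 2 - 8 * b * x + a ^ 2) /
      (4 * (x ^ 3 + a * x + b))) ^ 3 + a * ((x ^ 4 - 2 * a * x ^ 2 - 8 * b * x + a ^ 2) /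
      (4 * (x ^ 3 + a * x + b))) + b = _
  have hx' : x * (x ^ 2 + a) + b ≠ 0 := by
    intro h; apply hx; linear_combination h
  field_simp
  ring
/-- Every period-`p` orbit of the elliptic-curve tangent map `F`, avoiding the
zeros of `H(x) = x³ + ax + b`, has multiplier `λ` with `λ² = 4^p`, i.e.
`|λ| = 2^p`. The orbit is indexed as `x 0, …, x (p-1)`. -/
theorem elliptic_multiplier (a b : ℝ) (H F : ℝ → ℝ)
    (hH : H = fun x => x ^ 3 + a * x + b)
    (hF : F = fun x => (x ^ 4 - 2 * a * x ^ 2 - 8 * b * x + a ^ 2) /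
      (4 * (x ^ 3 + a * x + b)))
    (p : ℕ) (hp : 1 ≤ p) (x : ℕ → ℝ)
    (horb : ∀ n, n + 1 < p → F (x n) = x (n + 1))
    (hper : F (x (p - 1)) = x 0)
    (hHne : ∀ n < p, H (x n) ≠ 0) :
    (∏ n ∈ Finset.range p, deriv F (x n)) ^ 2 = 4 ^ p ∧
      |∏ n ∈ Finset.range p, deriv F (x n)| = 2 ^ p := by
  subst hH hF
  obtain ⟨q, rfl⟩ : ∃ q, p = q + 1 := ⟨p - 1, (Nat.succ_pred_eq_of_pos hp).symm⟩
  set F := fun x : ℝ => (x ^ 4 - 2 * a * x ^ 2 - 8 * b * x + a ^ 2) /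
      (4 * (x ^ 3 + a * x + b)) with hFdef
  set H := fun x : ℝ => x ^ 3 + a * x + b with hHdef
  set P := ∏ n ∈ Finset.range (q + 1), deriv F (x n) with hP
  set Q := ∏ n ∈ Finset.range (q + 1), H (x n) with hQ
  have key : ∀ n < q + 1, H (F (x n)) = (deriv F (x n)) ^ 2 * H (x n) / 4 := by
    intro n hn
    exact key_identity a b (x n) (hHne n hn)
  have prodF : ∏ n ∈ Finset.range (q + 1), H (F (x n)) = Q := by
    rw [Finset.prod_range_succ, hQ, Finset.prod_range_succ']
    congr 1
    · apply Finset.prod_congr rfl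
      intro n hn
      rw [horb n (by simpa using Finset.mem_range.mp hn)]
    · rw [show q + 1 - 1 = q from rfl] at hper
      rw [hper]
  have prodKey : ∏ n ∈ Finset.range (q + 1), H (F (x n)) =
      P ^ 2 * Q / 4 ^ (q + 1) := by
    rw [Finset.prod_congr rfl (fun n hn => key n (Finset.mem_range.mp hn))]
    rw [hP, hQ]
    simp only [div_eq_mul_inv, Finset.prod_mul_distrib, ← Finset.prod_pow,
      Finset.prod_const, Finset.card_range]
    rw [← inv_pow]
  have hQne : Q ≠ 0 := Finset.prod_ne_zero_iff.mpr fun n hn =>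
    hHne n (Finset.mem_range.mp hn)
  have hsq : P ^ 2 = 4 ^ (q + 1) := by
    have h := prodF.symm.trans prodKey
    have h4 : (4 : ℝ) ^ (q + 1) ≠ 0 := by positivity
    rw [eq_div_iff h4] at h
    exact mul_right_cancel₀ hQne (by linear_combination -h)
  refine ⟨hsq, ?_⟩
  have h2 : |P| ^ 2 = ((2 : ℝ) ^ (q + 1)) ^ 2 := by
    rw [sq_abs, hsq, show (4:ℝ) = 2 ^ 2 by norm_num, ← pow_mul, ← pow_mul,
      Nat.mul_comm]
  have hpos : (0 : ℝ) < 2 ^ (q + 1) := by positivity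
  nlinarith [abs_nonneg P, h2]
end

section
/- Fix ℓ ∈ [0,1) and define F_ℓ(x) = 4x(1−x)(1−ℓx) / (1−ℓx²)². If x₁, x₂, …, x_p ∈ [0,1] is a period-p orbit of F_ℓ (i.e., F_ℓ(x_n) = x_{n+1} for 1 ≤ n ≤ p−1 and F_ℓ(x_p) = x₁) with x_n(1−x_n)(1−ℓx_n) ≠ 0 for every n, then the multiplier λ = ∏_{n=1}^p F_ℓ'(x_n) satisfies λ² = 4^p, i.e., |λ| = 2^p. -/
lemma kf_deriv (ℓ t : ℝ) (hd : (1 - ℓ * t ^ 2) ≠ 0) :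
    deriv (fun x => 4 * x * (1 - x) * (1 - ℓ * x) / (1 - ℓ * x ^ 2) ^ 2) t =
      (((4 * (1 - t) + 4 * t * (-1)) * (1 - ℓ * t) + 4 * t * (1 - t) * (-ℓ)) * (1 - ℓ * t ^ 2) ^ 2
        - 4 * t * (1 - t) * (1 - ℓ * t) * (2 * (1 - ℓ * t ^ 2) ^ 1 * (-(ℓ * (2 * t ^ 1))))) /
        ((1 - ℓ * t ^ 2) ^ 2) ^ 2 := by
  have h4x : HasDerivAt (fun x : ℝ => 4 * x) 4 t := by
    simpa using (hasDerivAt_id t).const_mul (4 : ℝ)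
  have h1x : HasDerivAt (fun x : ℝ => 1 - x) (-1) t := by
    simpa using (hasDerivAt_id t).const_sub (1:ℝ)
  have hlx : HasDerivAt (fun x : ℝ => 1 - ℓ * x) (-ℓ) t := by
    simpa using ((hasDerivAt_id t).const_mul ℓ).const_sub (1:ℝ)
  have hN : HasDerivAt (fun x : ℝ => 4 * x * (1 - x) * (1 - ℓ * x))
      ((4 * (1 - t) + 4 * t * (-1)) * (1 - ℓ * t) + 4 * t * (1 - t) * (-ℓ)) t := by
    have := (h4x.mul h1x).mul hlx
    exact this
  have hdd : HasDerivAt (fun x : ℝ => 1 - ℓ * x ^ 2) (-(ℓ * (2 * t ^ 1))) t := by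
    simpa using ((hasDerivAt_pow 2 t).const_mul ℓ).const_sub (1:ℝ)
  have hD : HasDerivAt (fun x : ℝ => (1 - ℓ * x ^ 2) ^ 2)
      (2 * (1 - ℓ * t ^ 2) ^ 1 * (-(ℓ * (2 * t ^ 1)))) t := hdd.pow 2
  exact ((hN.div hD (pow_ne_zero 2 hd))).deriv

lemma kf_key (ℓ t : ℝ) (hd : (1 - ℓ * t ^ 2) ≠ 0) :
    (deriv (fun x => 4 * x * (1 - x) * (1 - ℓ * x) / (1 - ℓ * x ^ 2) ^ 2) t) ^ 2
        * (t * (1 - t) * (1 - ℓ * t))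
      = 4 * ((4 * t * (1 - t) * (1 - ℓ * t) / (1 - ℓ * t ^ 2) ^ 2)
          * (1 - 4 * t * (1 - t) * (1 - ℓ * t) / (1 - ℓ * t ^ 2) ^ 2)
          * (1 - ℓ * (4 * t * (1 - t) * (1 - ℓ * t) / (1 - ℓ * t ^ 2) ^ 2))) := by
  rw [kf_deriv ℓ t hd]
  generalize hD : 1 - ℓ * t ^ 2 = d at hd ⊢
  field_simp
  rw [← hD]
  ring

/-- Every period-`p` orbit of the Katsura-Fukuda map `F_ℓ` in `[0,1]`, avoiding
the zeros of `x(1-x)(1-ℓx)`, has multiplier `λ` with `λ² = 4^p`, i.e.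
`|λ| = 2^p`. The orbit is indexed as `x 0, …, x (p-1)`. -/
theorem katsura_fukuda_multiplier (ℓ : ℝ) (hℓ : ℓ ∈ Set.Ico (0 : ℝ) 1)
    (F : ℝ → ℝ)
    (hF : F = fun x => 4 * x * (1 - x) * (1 - ℓ * x) / (1 - ℓ * x ^ 2) ^ 2)
    (p : ℕ) (hp : 1 ≤ p) (x : ℕ → ℝ)
    (hxI : ∀ n < p, x n ∈ Set.Icc (0 : ℝ) 1)
    (horb : ∀ n, n + 1 < p → F (x n) = x (n + 1))
    (hper : F (x (p - 1)) = x 0)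
    (hHne : ∀ n < p, x n * (1 - x n) * (1 - ℓ * x n) ≠ 0) :
    (∏ n ∈ Finset.range p, deriv F (x n)) ^ 2 = 4 ^ p ∧
      |∏ n ∈ Finset.range p, deriv F (x n)| = 2 ^ p := by
  obtain ⟨hℓ0, hℓ1⟩ := hℓ
  set H : ℝ → ℝ := fun t => t * (1 - t) * (1 - ℓ * t) with hH
  -- pointwise identity on the orbit
  have main : ∀ n < p, (deriv F (x n)) ^ 2 * H (x n) = 4 * H (F (x n)) := by
    intro n hn
    have hx := hxI n hn
    have hd : (1 - ℓ * (x n) ^ 2) ≠ 0 := by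
      have h1 : (x n) ^ 2 ≤ 1 := by nlinarith [hx.1, hx.2]
      have h2 : ℓ * (x n) ^ 2 ≤ ℓ := by nlinarith [sq_nonneg (x n)]
      nlinarith
    have := kf_key ℓ (x n) hd
    rw [hF]
    simpa [hH] using this
  -- the product of H over the orbit image equals product of H over orbit
  obtain ⟨q, rfl⟩ : ∃ q, p = q + 1 := ⟨p - 1, (Nat.succ_pred_eq_of_pos hp).symm⟩
  have hshift : ∏ n ∈ Finset.range (q + 1), H (F (x n))
      = ∏ n ∈ Finset.range (q + 1), H (x n) := by
    rw [Finset.prod_range_succ, Finset.prod_range_succ']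
    congr 1
    · exact Finset.prod_congr rfl fun n hn => by
        rw [horb n (by simpa using Finset.mem_range.mp hn)]
    · rw [show q + 1 - 1 = q from rfl] at hper
      rw [hper]
  have hprod : (∏ n ∈ Finset.range (q + 1), deriv F (x n)) ^ 2
      * ∏ n ∈ Finset.range (q + 1), H (x n)
      = 4 ^ (q + 1) * ∏ n ∈ Finset.range (q + 1), H (x n) := by
    rw [← Finset.prod_pow, ← Finset.prod_mul_distrib]
    rw [Finset.prod_congr rfl fun n hn => main n (Finset.mem_range.mp hn)]
    rw [Finset.prod_mul_distrib, Finset.prod_const, Finset.card_range, hshift]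
  have hPne : (∏ n ∈ Finset.range (q + 1), H (x n)) ≠ 0 :=
    Finset.prod_ne_zero_iff.mpr fun n hn => hHne n (Finset.mem_range.mp hn)
  have hsq : (∏ n ∈ Finset.range (q + 1), deriv F (x n)) ^ 2 = 4 ^ (q + 1) :=
    mul_right_cancel₀ hPne hprod
  refine ⟨hsq, ?_⟩
  have h1 : |∏ n ∈ Finset.range (q + 1), deriv F (x n)| ^ 2 = (2 ^ (q + 1) : ℝ) ^ 2 := by
    rw [sq_abs, hsq, ← pow_mul, show (4:ℝ) = 2 ^ 2 by norm_num, ← pow_mul]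
    ring_nf
  have h2 : (0:ℝ) ≤ |∏ n ∈ Finset.range (q + 1), deriv F (x n)| := abs_nonneg _
  have h3 : (0:ℝ) < 2 ^ (q + 1) := by positivity
  nlinarith [h1, h2, h3]
end

section
/- Let f, g : ℝ → ℝ be continuous maps such that f agrees with a continuously differentiable function f_L on (−∞,0] and with a continuously differentiable function f_R on [0,∞), and g agrees with continuously differentiable functions g_L on (−∞,0] and g_R on [0,∞), with f_L'(0), f_R'(0), g_L'(0), g_R'(0) all nonzero and f(0) > 0, g(0) > 0. Suppose h : ℝ → ℝ satisfies h ∘ f = g ∘ h on a neighbourhood of 0, h(0) = 0, h maps (0,∞) into (0,∞) and (−∞,0) into (−∞,0), h is differentiable at the point f(0) with h'(f(0)) ≠ 0, and h has nonzero one-sided derivatives at 0 from the right and from the left. Then h is differentiable at 0 (i.e., the two one-sided derivatives of h at 0 coincide) if and only if f_L'(0)/f_R'(0) = g_L'(0)/g_R'(0). -/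
/-- A conjugacy `h` between two piecewise-smooth maps `f`, `g` with kinks at
`0` (where `f = f_L` on `(-∞,0]`, `f = f_R` on `[0,∞)`, similarly for `g`),
fixing `0`, preserving the sides of `0`, differentiable at `f 0 > 0` with
nonzero derivative, and with nonzero one-sided derivatives at `0`, is
differentiable at `0` (the one-sided derivatives coincide) if and only if the
slope ratios at the kinks agree: `f_L'(0)/f_R'(0) = g_L'(0)/g_R'(0)`. -/
theorem conjugacy_differentiable_at_kink_iff_slope_ratios
    (f g fL fR gL gR : ℝ → ℝ)
    (hfc : Continuous f) (hgc : Continuous g)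
    (hfL : ContDiff ℝ 1 fL) (hfR : ContDiff ℝ 1 fR)
    (hgL : ContDiff ℝ 1 gL) (hgR : ContDiff ℝ 1 gR)
    (hfLeq : ∀ x ≤ (0 : ℝ), f x = fL x) (hfReq : ∀ x ≥ (0 : ℝ), f x = fR x)
    (hgLeq : ∀ x ≤ (0 : ℝ), g x = gL x) (hgReq : ∀ x ≥ (0 : ℝ), g x = gR x)
    (hfL0 : deriv fL 0 ≠ 0) (hfR0 : deriv fR 0 ≠ 0)
    (hgL0 : deriv gL 0 ≠ 0) (hgR0 : deriv gR 0 ≠ 0)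
    (hf0 : 0 < f 0) (hg0 : 0 < g 0)
    (h : ℝ → ℝ)
    (hconj : ∀ᶠ x in nhds (0 : ℝ), h (f x) = g (h x))
    (h0 : h 0 = 0)
    (hpos : Set.MapsTo h (Set.Ioi 0) (Set.Ioi 0))
    (hneg : Set.MapsTo h (Set.Iio 0) (Set.Iio 0))
    (hdiff : DifferentiableAt ℝ h (f 0))
    (hd0 : deriv h (f 0) ≠ 0)
    (dR dL : ℝ)
    (hdR : HasDerivWithinAt h dR (Set.Ici 0) 0) (hdRne : dR ≠ 0)
    (hdL : HasDerivWithinAt h dL (Set.Iic 0) 0) (hdLne : dL ≠ 0) :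
    dL = dR ↔ deriv fL 0 / deriv fR 0 = deriv gL 0 / deriv gR 0 := by
  set A := deriv h (f 0) with hA
  have hhA : HasDerivAt h A (f 0) := hdiff.hasDerivAt
  have hfR00 : fR 0 = f 0 := (hfReq 0 le_rfl).symm
  have hfL00 : fL 0 = f 0 := (hfLeq 0 le_rfl).symm
  -- one-sided derivatives of x ↦ h (f x)
  have hfRd : HasDerivAt fR (deriv fR 0) 0 :=
    ((hfR.differentiable one_ne_zero) 0).hasDerivAt
  have hfLd : HasDerivAt fL (deriv fL 0) 0 :=
    ((hfL.differentiable one_ne_zero) 0).hasDerivAt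
  have hgRd : HasDerivAt gR (deriv gR 0) (h 0) := by
    rw [h0]; exact ((hgR.differentiable one_ne_zero) 0).hasDerivAt
  have hgLd : HasDerivAt gL (deriv gL 0) (h 0) := by
    rw [h0]; exact ((hgL.differentiable one_ne_zero) 0).hasDerivAt
  have hhA' : HasDerivAt h A (fR 0) := hfR00 ▸ hhA
  have hhA'' : HasDerivAt h A (fL 0) := hfL00 ▸ hhA
  -- right side
  have hR1 : HasDerivWithinAt (fun x => h (f x)) (A * deriv fR 0) (Set.Ici 0) 0 := by
    have := (hhA'.comp 0 hfRd).hasDerivWithinAt (s := Set.Ici 0)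
    exact this.congr (fun x hx => by simp [Function.comp, hfReq x hx])
      (by simp [Function.comp, hfReq 0 le_rfl])
  have hR2 : HasDerivWithinAt (fun x => h (f x)) (deriv gR 0 * dR) (Set.Ici 0) 0 := by
    have hcomp : HasDerivWithinAt (fun x => gR (h x)) (deriv gR 0 * dR) (Set.Ici 0) 0 :=
      hgRd.comp_hasDerivWithinAt 0 hdR
    have heq : ∀ x ∈ Set.Ici (0 : ℝ), g (h x) = gR (h x) := by
      intro x hx
      rcases eq_or_lt_of_le (Set.mem_Ici.mp hx) with rfl | hlt
      · rw [h0]; exact hgReq 0 le_rfl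
      · exact hgReq _ (le_of_lt (hpos hlt))
    have hcomp' : HasDerivWithinAt (fun x => g (h x)) (deriv gR 0 * dR) (Set.Ici 0) 0 :=
      hcomp.congr heq (heq 0 (by simp))
    exact hcomp'.congr_of_eventuallyEq (hconj.filter_mono nhdsWithin_le_nhds)
      (hconj.self_of_nhds)
  have keyR : A * deriv fR 0 = deriv gR 0 * dR := by
    have e1 := hR1.derivWithin (uniqueDiffOn_Ici 0 0 (by simp))
    have e2 := hR2.derivWithin (uniqueDiffOn_Ici 0 0 (by simp))
    rw [← e1, ← e2]
  -- left side
  have hL1 : HasDerivWithinAt (fun x => h (f x)) (A * deriv fL 0) (Set.Iic 0) 0 := by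
    have := (hhA''.comp 0 hfLd).hasDerivWithinAt (s := Set.Iic 0)
    exact this.congr (fun x hx => by simp [Function.comp, hfLeq x hx])
      (by simp [Function.comp, hfLeq 0 le_rfl])
  have hL2 : HasDerivWithinAt (fun x => h (f x)) (deriv gL 0 * dL) (Set.Iic 0) 0 := by
    have hcomp : HasDerivWithinAt (fun x => gL (h x)) (deriv gL 0 * dL) (Set.Iic 0) 0 :=
      hgLd.comp_hasDerivWithinAt 0 hdL
    have heq : ∀ x ∈ Set.Iic (0 : ℝ), g (h x) = gL (h x) := by
      intro x hx
      rcases eq_or_lt_of_le (Set.mem_Iic.mp hx) with rfl | hlt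
      · rw [h0]; exact hgLeq 0 le_rfl
      · exact hgLeq _ (le_of_lt (hneg hlt))
    have hcomp' : HasDerivWithinAt (fun x => g (h x)) (deriv gL 0 * dL) (Set.Iic 0) 0 :=
      hcomp.congr heq (heq 0 (by simp))
    exact hcomp'.congr_of_eventuallyEq (hconj.filter_mono nhdsWithin_le_nhds)
      (hconj.self_of_nhds)
  have keyL : A * deriv fL 0 = deriv gL 0 * dL := by
    have e1 := hL1.derivWithin (uniqueDiffOn_Iic 0 0 (by simp))
    have e2 := hL2.derivWithin (uniqueDiffOn_Iic 0 0 (by simp))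
    rw [← e1, ← e2]
  -- algebra
  have hdLv : dL = A * deriv fL 0 / deriv gL 0 := by
    field_simp
    linear_combination -keyL
  have hdRv : dR = A * deriv fR 0 / deriv gR 0 := by
    field_simp
    linear_combination -keyR
  rw [hdLv, hdRv, div_eq_div_iff hgL0 hgR0, div_eq_div_iff hfR0 hgR0]
  constructor
  · intro H
    have := mul_left_cancel₀ hd0 (show A * (deriv fL 0 * deriv gR 0)
        = A * (deriv fR 0 * deriv gL 0) by linear_combination H)
    linear_combination this
  · intro H
    linear_combination A * H
end
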